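/- Let G be a group, a, b ∈ G, and m a natural number. Then a^{-m} b a^m b^{-1} ≡ [a, b^{-1}]^m · [[a,b^{-1}], a]^{m(m-1)/2} modulo G^(4). -/

import Mathlib

/-- The commutator `[a,b] = a⁻¹ b⁻¹ a b`. -/
def commP {G : Type*} [Group G] (a b : G) : G := a⁻¹ * b⁻¹ * a * b

private lemma aux_comm {Q : Type*} [Group Q] (a b c d : Q)
    (hc : c = a⁻¹ * b * a * b⁻¹) (hconj : a⁻¹ * c * a = c * d)
    (hda : Commute d a) (hdc : Commute d c) (m : ℕ) :
    (a ^ m)⁻¹ * b * a ^ m * b⁻¹ = c ^ m * d ^ (m * (m - 1) / 2) := by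
  induction m with
  | zero => simp
  | succ m ih =>
    have h1 : (a ^ (m + 1))⁻¹ * b * a ^ (m + 1) * b⁻¹
        = a⁻¹ * ((a ^ m)⁻¹ * b * a ^ m * b⁻¹) * a * c := by
      rw [hc]; group
    rw [h1, ih]
    have hT : m + m * (m - 1) / 2 = (m + 1) * ((m + 1) - 1) / 2 := by
      rcases m with _ | k
      · simp
      · simp only [Nat.add_sub_cancel]
        have h : (k + 1 + 1) * (k + 1) = (k + 1) * k + 2 * (k + 1) := by ring
        rw [h, Nat.add_mul_div_left _ _ (by norm_num)]; omega
    have hdpow : a⁻¹ * d ^ (m * (m - 1) / 2) * a = d ^ (m * (m - 1) / 2) := by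
      rw [← (hda.pow_left (m * (m - 1) / 2)).inv_right.eq]; group
    have hcp : (a⁻¹ * c * a) ^ m = a⁻¹ * c ^ m * a := by
      have := conj_pow (i := m) (a := a⁻¹) (b := c)
      simpa using this
    have h2 : a⁻¹ * (c ^ m * d ^ (m * (m - 1) / 2)) * a
        = (a⁻¹ * c * a) ^ m * d ^ (m * (m - 1) / 2) := by
      rw [hcp]
      calc a⁻¹ * (c ^ m * d ^ (m * (m - 1) / 2)) * a
          = (a⁻¹ * c ^ m * a) * (a⁻¹ * d ^ (m * (m - 1) / 2) * a) := by group
        _ = _ := by rw [hdpow]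
    rw [h2, hconj, (hdc.symm.mul_pow m)]
    have hcom : Commute c (d ^ (m + m * (m - 1) / 2)) := (hdc.symm.pow_right _)
    calc c ^ m * d ^ m * d ^ (m * (m - 1) / 2) * c
        = c ^ m * (d ^ (m + m * (m - 1) / 2) * c) := by rw [pow_add]; group
      _ = c ^ m * (c * d ^ (m + m * (m - 1) / 2)) := by rw [hcom.eq]
      _ = c ^ (m + 1) * d ^ ((m + 1) * ((m + 1) - 1) / 2) := by
          rw [← hT, pow_succ]; group

open scoped commutatorElement

theorem conj_pow_mod_lcs4 {G : Type*} [Group G] (a b : G) (m : ℕ) :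
    (a ^ m)⁻¹ * b * a ^ m * b⁻¹ *
      ((commP a b⁻¹) ^ m * (commP (commP a b⁻¹) a) ^ (m * (m - 1) / 2))⁻¹
      ∈ (⊤ : Subgroup G).lowerCentralSeries 3 := by
  set N := (⊤ : Subgroup G).lowerCentralSeries 3 with hN
  set c : G := commP a b⁻¹ with hcdef
  set d : G := commP c a with hddef
  have hc2 : c ∈ (⊤ : Subgroup G).lowerCentralSeries 1 := by
    have : c = ⁅a⁻¹, b⁆ := by simp [hcdef, commP, commutatorElement_def]
    rw [this, Subgroup.top_lowerCentralSeries_one]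
    exact Subgroup.commutator_mem_commutator (Subgroup.mem_top _) (Subgroup.mem_top _)
  have hd3 : d ∈ (⊤ : Subgroup G).lowerCentralSeries 2 := by
    have : d = ⁅c⁻¹, a⁻¹⁆ := by simp [hddef, commP, commutatorElement_def]
    rw [this]
    show _ ∈ ⁅(⊤ : Subgroup G).lowerCentralSeries 1, (⊤ : Subgroup G)⁆
    exact Subgroup.commutator_mem_commutator (inv_mem hc2) (Subgroup.mem_top _)
  have key : ∀ x : G, ⁅d, x⁆ ∈ N := fun x => by
    show _ ∈ ⁅(⊤ : Subgroup G).lowerCentralSeries 2, (⊤ : Subgroup G)⁆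
    exact Subgroup.commutator_mem_commutator hd3 (Subgroup.mem_top _)
  rw [← QuotientGroup.eq_one_iff, QuotientGroup.mk_mul, QuotientGroup.mk_inv,
    mul_inv_eq_one]
  have hmk : ∀ x y : G, (↑(x * y) : G ⧸ N) = ↑x * ↑y := fun _ _ => rfl
  have hcomm : ∀ x : G, Commute ((↑d : G ⧸ N)) (↑x : G ⧸ N) := by
    intro x
    have h1 : (↑(⁅d, x⁆) : G ⧸ N) = 1 := (QuotientGroup.eq_one_iff _).mpr (key x)
    rw [commutatorElement_def] at h1
    simp only [QuotientGroup.mk_mul, QuotientGroup.mk_inv] at h1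
    show (↑d : G ⧸ N) * ↑x = ↑x * ↑d
    calc (↑d : G ⧸ N) * ↑x = ((↑d : G ⧸ N) * ↑x * (↑d)⁻¹ * (↑x)⁻¹) * (↑x * ↑d) := by group
      _ = ↑x * ↑d := by rw [h1]; group
  have := aux_comm (Q := G ⧸ N) (↑a) (↑b) (↑c) (↑d)
    (by rw [hcdef]; show ((commP a b⁻¹ : G) : G ⧸ N) = _
        simp only [commP, inv_inv, QuotientGroup.mk_mul, QuotientGroup.mk_inv])
    (by have : a⁻¹ * c * a = c * d := by rw [hddef]; unfold commP; group
        calc (↑a : G ⧸ N)⁻¹ * ↑c * ↑a = ↑(a⁻¹ * c * a) := by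
              simp only [QuotientGroup.mk_mul, QuotientGroup.mk_inv]
          _ = ↑(c * d) := by rw [this]
          _ = ↑c * ↑d := rfl)
    (hcomm a) (hcomm c) m
  simp only [QuotientGroup.mk_mul, QuotientGroup.mk_inv, QuotientGroup.mk_pow] at this ⊢
  rw [this]
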